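/- Let m be even, k a divisor of m with k ∉ {m, m/2}, and suppose v₂(m) > v₂(k) + 1 (where v₂ is the 2-adic valuation). Let f(x) = Tr_k^m(x^{2^k+1}) and W_f(a,b) = Σ_{x ∈ F_{2^m}} (-1)^{Tr(a f(x) + b x)}. Then for every a ∈ F_{2^m} with Tr_k^m(a) ≠ 0 and every b ∈ F_{2^m}, W_f(a,b)² ∈ {0, 2^{m+2k}}. -/

import Mathlib

open Finset
open scoped Classical

noncomputable instance (m : ℕ) : Fintype (GaloisField 2 m) := Fintype.ofFinite _

/-- Absolute trace from `GF(2^m)` to `F_2`. -/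
noncomputable def Tr (m : ℕ) : GaloisField 2 m → ZMod 2 :=
  Algebra.trace (ZMod 2) (GaloisField 2 m)

/-- Walsh transform `W_f(a,b) = Σ_x (-1)^{Tr(a f(x) + b x)}`. -/
noncomputable def Walsh (m : ℕ) (f : GaloisField 2 m → GaloisField 2 m)
    (a b : GaloisField 2 m) : ℤ :=
  ∑ x : GaloisField 2 m, (-1 : ℤ) ^ (Tr m (a * f x + b * x)).val

namespace Stmt10Aux

open Polynomial

variable {m : ℕ}

lemma chi_add : ∀ s t : ZMod 2,
    ((-1 : ℤ)) ^ ((s + t).val) = (-1 : ℤ) ^ s.val * (-1 : ℤ) ^ t.val := by decide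

lemma chi_sq : ∀ s : ZMod 2, ((-1 : ℤ)) ^ s.val * (-1 : ℤ) ^ s.val = 1 := by decide

lemma zmod2_eq_one {t : ZMod 2} (h : t ≠ 0) : t = 1 := by revert t; decide

lemma tr_add (x y : GaloisField 2 m) : Tr m (x + y) = Tr m x + Tr m y :=
  map_add (Algebra.trace (ZMod 2) (GaloisField 2 m)) x y

lemma tr_zero : Tr m (0 : GaloisField 2 m) = 0 :=
  map_zero (Algebra.trace (ZMod 2) (GaloisField 2 m))

lemma tr_sum {ι : Type*} (s : Finset ι) (g : ι → GaloisField 2 m) :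
    Tr m (∑ i ∈ s, g i) = ∑ i ∈ s, Tr m (g i) :=
  map_sum (Algebra.trace (ZMod 2) (GaloisField 2 m)) g s

/-- Frobenius as an algebra equivalence over `ZMod 2`. -/
noncomputable def frobAlg (m : ℕ) : GaloisField 2 m ≃ₐ[ZMod 2] GaloisField 2 m :=
  AlgEquiv.ofRingEquiv (f := frobeniusEquiv (GaloisField 2 m) 2)
    (fun r => by
      have h2 : ∀ r : ZMod 2, r ^ 2 = r := by decide
      show frobenius (GaloisField 2 m) 2 _ = _
      rw [frobenius_def, ← map_pow, h2])

lemma tr_sq (x : GaloisField 2 m) : Tr m (x ^ 2) = Tr m x := by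
  have h := Algebra.trace_eq_of_algEquiv (frobAlg m) x
  have hx : (frobAlg m) x = x ^ 2 := rfl
  rw [hx] at h
  exact h

lemma tr_pow2 (j : ℕ) (x : GaloisField 2 m) : Tr m (x ^ 2 ^ j) = Tr m x := by
  induction j with
  | zero => simp
  | succ j ih =>
    have : x ^ 2 ^ (j + 1) = (x ^ 2 ^ j) ^ 2 := by
      rw [← pow_mul, pow_succ]
    rw [this, tr_sq, ih]

lemma card_K (hm : m ≠ 0) : Fintype.card (GaloisField 2 m) = 2 ^ m := by
  have := GaloisField.card 2 m hm
  rwa [Nat.card_eq_fintype_card] at this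

lemma pow_card_K (hm : m ≠ 0) (x : GaloisField 2 m) : x ^ 2 ^ m = x := by
  rw [← card_K hm]
  exact FiniteField.pow_card x

lemma frob_injK (j : ℕ) : Function.Injective (fun x : GaloisField 2 m => x ^ 2 ^ j) := by
  intro x y h
  simp only at h
  have h2 : (x - y) ^ 2 ^ j = 0 := by
    rw [sub_pow_char_pow, h, sub_self]
  have h3 : x - y = 0 := (pow_eq_zero_iff (pow_ne_zero j (two_ne_zero))).mp h2
  exact sub_eq_zero.mp h3

lemma tr_shift (hm : m ≠ 0) {j : ℕ} (hj : j ≤ m) (a x : GaloisField 2 m) :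
    Tr m (a * x ^ 2 ^ j) = Tr m (a ^ 2 ^ (m - j) * x) := by
  have h := tr_pow2 (m - j) (a * x ^ 2 ^ j)
  rw [mul_pow, ← pow_mul, ← pow_add, Nat.add_sub_cancel' hj, pow_card_K hm] at h
  exact h.symm

lemma sum_chi (hm : m ≠ 0) (d : GaloisField 2 m) :
    (∑ x : GaloisField 2 m, (-1 : ℤ) ^ ((Tr m (d * x)).val)) =
      if d = 0 then (2 : ℤ) ^ m else 0 := by
  by_cases hd : d = 0
  · rw [if_pos hd]
    have : ∀ x : GaloisField 2 m, (-1 : ℤ) ^ ((Tr m (d * x)).val) = 1 := by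
      intro x; rw [hd, zero_mul, tr_zero]; rfl
    rw [Finset.sum_congr rfl (fun x _ => this x), Finset.sum_const, card_univ, card_K hm]
    simp
  · rw [if_neg hd]
    have hTr : Algebra.trace (ZMod 2) (GaloisField 2 m) ≠ 0 :=
      Algebra.trace_ne_zero _ _
    obtain ⟨y, hy⟩ : ∃ y, Tr m y ≠ 0 := by
      by_contra h
      push_neg at h
      exact hTr (LinearMap.ext fun z => h z)
    have hy1 : Tr m y = 1 := zmod2_eq_one hy
    set x0 := d⁻¹ * y with hx0def
    have hx0 : Tr m (d * x0) = 1 := by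
      rw [hx0def, ← mul_assoc, mul_inv_cancel₀ hd, one_mul, hy1]
    set S := ∑ x : GaloisField 2 m, (-1 : ℤ) ^ ((Tr m (d * x)).val) with hS
    have hflip : ∀ t : ZMod 2, (-1 : ℤ) ^ ((t + 1).val) = -((-1 : ℤ) ^ t.val) := by decide
    have key : S = -S := by
      have h1 : S = ∑ x : GaloisField 2 m, (-1 : ℤ) ^ ((Tr m (d * (x + x0))).val) :=
        (Fintype.sum_equiv (Equiv.addRight x0)
          (fun x => (-1 : ℤ) ^ ((Tr m (d * (x + x0))).val))
          (fun x => (-1 : ℤ) ^ ((Tr m (d * x)).val)) (fun x => rfl)).symm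
      have h2 : ∀ x : GaloisField 2 m,
          (-1 : ℤ) ^ ((Tr m (d * (x + x0))).val) = -((-1 : ℤ) ^ ((Tr m (d * x)).val)) := by
        intro x; rw [mul_add, tr_add, hx0, hflip]
      calc S = ∑ x : GaloisField 2 m, (-1 : ℤ) ^ ((Tr m (d * (x + x0))).val) := h1
        _ = ∑ x : GaloisField 2 m, -((-1 : ℤ) ^ ((Tr m (d * x)).val)) :=
            Finset.sum_congr rfl (fun x _ => h2 x)
        _ = -S := by rw [Finset.sum_neg_distrib]
    omega

end Stmt10Aux


namespace Stmt10Aux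

open Polynomial

lemma dvd_X_pow (K : Type*) [Field K] [CharP K 2] (j : ℕ) :
    ∀ s : ℕ, s ≠ 0 → (X ^ 2 ^ j - X : K[X]) ∣ X ^ 2 ^ (j * s) - X := by
  intro s
  induction s with
  | zero => intro h; exact absurd rfl h
  | succ s ih =>
    intro _
    rcases eq_or_ne s 0 with rfl | hs0
    · simp
    · have key : (X ^ 2 ^ (j * (s + 1)) - X : K[X]) =
          (X ^ 2 ^ (j * s) - X) ^ 2 ^ j + (X ^ 2 ^ j - X) := by
        rw [sub_pow_char_pow, ← pow_mul, ← pow_add]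
        rw [show j * s + j = j * (s + 1) by ring]
        ring
      rw [key]
      exact dvd_add (dvd_pow (ih hs0) (pow_ne_zero j two_ne_zero)) dvd_rfl

end Stmt10Aux

open Stmt10Aux Polynomial in
/-- For `f(x) = Tr_k^m(x^{2^k+1})` with `v₂(m) > v₂(k)+1`, if `Tr_k^m(a) ≠ 0`
then `W_f(a,b)² ∈ {0, 2^{m+2k}}`. -/
theorem stmt10 (m k : ℕ) (hk : 0 < k) (hkm : k ∣ m) (hk1 : k ≠ m) (hk2 : k ≠ m / 2)
    (hm : Even m) (hv : padicValNat 2 k + 1 < padicValNat 2 m)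
    (f : GaloisField 2 m → GaloisField 2 m)
    (hf : ∀ x, f x = ∑ i ∈ Finset.range (m / k), (x ^ (2 ^ k + 1)) ^ 2 ^ (k * i)) :
    ∀ a b : GaloisField 2 m,
      (∑ i ∈ Finset.range (m / k), a ^ 2 ^ (k * i)) ≠ 0 →
      (Walsh m f a b) ^ 2 ∈ ({0, 2 ^ (m + 2 * k)} : Set ℤ) := by
  intro a b hc
  -- numerics
  have hm0 : m ≠ 0 := by
    rintro rfl
    rw [padicValNat.zero] at hv
    omega
  have hk0 : k ≠ 0 := hk.ne'
  set n := m / k with hn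
  have hkn : k * n = m := Nat.mul_div_cancel' hkm
  have hn0 : n ≠ 0 := by
    rintro h
    rw [h, mul_zero] at hkn
    exact hm0 hkn.symm
  have h2n : 2 ∣ n := by
    by_contra h
    have h1 := padicValNat.eq_zero_of_not_dvd h
    have hmul : padicValNat 2 m = padicValNat 2 k + padicValNat 2 n := by
      rw [← hkn]; exact padicValNat.mul hk0 hn0
    omega
  obtain ⟨t, hnt⟩ := h2n
  have ht0 : t ≠ 0 := by rintro rfl; simp at hnt; exact hn0 hnt
  have hm2k : m = 2 * k * t := by rw [← hkn, hnt]; ring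
  have hkm' : k ≤ m := Nat.le_of_dvd (Nat.pos_of_ne_zero hm0) hkm
  have h2km : 2 * k ≤ m := by
    rcases Nat.lt_or_ge t 1 with h | h
    · omega
    · calc 2 * k = 2 * k * 1 := by ring
        _ ≤ 2 * k * t := Nat.mul_le_mul_left _ h
        _ = m := hm2k.symm
  set c : GaloisField 2 m := ∑ i ∈ Finset.range n, a ^ 2 ^ (k * i) with hcdef
  -- Step A : c is fixed by the k-th power Frobenius
  have ha : a ^ 2 ^ (k * n) = a := by rw [hkn]; exact pow_card_K hm0 a
  have hshift_sum : (∑ i ∈ Finset.range n, a ^ 2 ^ (k * (i + 1))) = c := by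
    have h0 : a ^ 2 ^ (k * 0) = a := by simp
    have key : c + a = (∑ i ∈ Finset.range n, a ^ 2 ^ (k * (i + 1))) + a := by
      calc c + a = c + a ^ 2 ^ (k * n) := by rw [ha]
        _ = ∑ i ∈ Finset.range (n + 1), a ^ 2 ^ (k * i) :=
            (Finset.sum_range_succ (fun i => a ^ 2 ^ (k * i)) n).symm
        _ = (∑ i ∈ Finset.range n, a ^ 2 ^ (k * (i + 1))) + a ^ 2 ^ (k * 0) :=
            Finset.sum_range_succ' (fun i => a ^ 2 ^ (k * i)) n
        _ = (∑ i ∈ Finset.range n, a ^ 2 ^ (k * (i + 1))) + a := by rw [h0]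
    exact (add_right_cancel key.symm)
  have hc_pow : c ^ 2 ^ k = c := by
    rw [hcdef, sum_pow_char_pow]
    have hterm : ∀ i ∈ Finset.range n,
        (a ^ 2 ^ (k * i)) ^ 2 ^ k = a ^ 2 ^ (k * (i + 1)) := by
      intro i _
      rw [← pow_mul, ← pow_add, show k * i + k = k * (i + 1) from by ring]
    rw [Finset.sum_congr rfl hterm]
    exact hshift_sum
  have hc_powj : ∀ j : ℕ, c ^ 2 ^ (k * j) = c := by
    intro j
    induction j with
    | zero => simp
    | succ j ih =>
      have h1 : c ^ 2 ^ (k * (j + 1)) = (c ^ 2 ^ (k * j)) ^ 2 ^ k := by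
        rw [← pow_mul, ← pow_add, Nat.mul_add, Nat.mul_one]
      rw [h1, ih, hc_pow]
  have hc_mk : c ^ 2 ^ (m - k) = c := by
    have h1 : k * (n - 1) + k * 1 = k * n := by rw [← Nat.mul_add]; congr 1; omega
    have h2 : m - k = k * (n - 1) := by omega
    rw [h2, hc_powj]
  -- Step B : rewrite the Walsh sum with c
  have hW : Walsh m f a b =
      ∑ x : GaloisField 2 m, (-1 : ℤ) ^ ((Tr m (c * x ^ (2 ^ k + 1) + b * x)).val) := by
    unfold Walsh
    apply Finset.sum_congr rfl
    intro x _
    have hfx : Tr m (a * f x) = Tr m (c * x ^ (2 ^ k + 1)) := by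
      rw [hf x, Finset.mul_sum, tr_sum]
      have hstep : ∀ i ∈ Finset.range n,
          Tr m (a * (x ^ (2 ^ k + 1)) ^ 2 ^ (k * i)) =
            Tr m (a ^ 2 ^ (k * ((n - 1 - i) + 1)) * x ^ (2 ^ k + 1)) := by
        intro i hi
        have hi' : i < n := Finset.mem_range.mp hi
        have hj : k * i ≤ m := by
          calc k * i ≤ k * n := Nat.mul_le_mul_left k hi'.le
            _ = m := hkn
        rw [tr_shift hm0 hj]
        have h1 : k * ((n - 1 - i) + 1) + k * i = m := by
          rw [← Nat.mul_add, show n - 1 - i + 1 + i = n from by omega, hkn]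
        rw [show m - k * i = k * ((n - 1 - i) + 1) from by omega]
      calc (∑ i ∈ Finset.range n, Tr m (a * (x ^ (2 ^ k + 1)) ^ 2 ^ (k * i)))
          = ∑ i ∈ Finset.range n,
              Tr m (a ^ 2 ^ (k * ((n - 1 - i) + 1)) * x ^ (2 ^ k + 1)) :=
            Finset.sum_congr rfl hstep
        _ = ∑ i ∈ Finset.range n, Tr m (a ^ 2 ^ (k * (i + 1)) * x ^ (2 ^ k + 1)) :=
            Finset.sum_range_reflect
              (fun i => Tr m (a ^ 2 ^ (k * (i + 1)) * x ^ (2 ^ k + 1))) n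
        _ = Tr m ((∑ i ∈ Finset.range n, a ^ 2 ^ (k * (i + 1))) * x ^ (2 ^ k + 1)) := by
            rw [Finset.sum_mul, tr_sum]
        _ = Tr m (c * x ^ (2 ^ k + 1)) := by rw [hshift_sum]
    rw [tr_add, tr_add, hfx]
  -- the quadratic phase function
  set g : GaloisField 2 m → ZMod 2 := fun x => Tr m (c * x ^ (2 ^ k + 1) + b * x) with hgdef
  -- Step C : additivity structure
  have hq : ∀ u x : GaloisField 2 m,
      g (x + u) = g x + g u + Tr m ((c * (u ^ 2 ^ (m - k) + u ^ 2 ^ k)) * x) := by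
    intro u x
    have hpoly : c * (x + u) ^ (2 ^ k + 1) + b * (x + u) =
        (c * x ^ (2 ^ k + 1) + b * x) + (c * u ^ (2 ^ k + 1) + b * u) +
          (c * (u * x ^ 2 ^ k) + c * (u ^ 2 ^ k * x)) := by
      have e1 : ∀ z : GaloisField 2 m, z ^ (2 ^ k + 1) = z ^ 2 ^ k * z :=
        fun z => pow_succ z (2 ^ k)
      rw [e1, e1, e1, show (x + u) ^ (2 ^ k : ℕ) = x ^ (2 ^ k : ℕ) + u ^ (2 ^ k : ℕ)
        from add_pow_char_pow x u 2 k]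
      ring
    have h1 : Tr m (c * (u * x ^ 2 ^ k)) = Tr m (c * u ^ 2 ^ (m - k) * x) := by
      have h := tr_shift hm0 hkm' (c * u) x
      rw [mul_pow, hc_mk] at h
      rw [← mul_assoc]
      exact h
    have hcross : Tr m (c * (u * x ^ 2 ^ k) + c * (u ^ 2 ^ k * x)) =
        Tr m ((c * (u ^ 2 ^ (m - k) + u ^ 2 ^ k)) * x) := by
      rw [tr_add, h1, show c * (u ^ 2 ^ k * x) = c * u ^ 2 ^ k * x from by ring, ← tr_add]
      congr 1
      ring
    show Tr m (c * (x + u) ^ (2 ^ k + 1) + b * (x + u)) = _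
    rw [hpoly, tr_add, tr_add, hcross]
  -- Step D : square of the Walsh sum
  have hWsq : (Walsh m f a b) ^ 2 =
      ∑ u : GaloisField 2 m, (-1 : ℤ) ^ ((g u).val) *
        (if c * (u ^ 2 ^ (m - k) + u ^ 2 ^ k) = 0 then (2 : ℤ) ^ m else 0) := by
    rw [hW, sq, Finset.sum_mul_sum]
    calc (∑ x : GaloisField 2 m, ∑ y : GaloisField 2 m,
            (-1 : ℤ) ^ ((g x).val) * (-1 : ℤ) ^ ((g y).val))
        = ∑ x : GaloisField 2 m, ∑ u : GaloisField 2 m,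
            (-1 : ℤ) ^ ((g x).val) * (-1 : ℤ) ^ ((g (x + u)).val) :=
          Finset.sum_congr rfl fun x _ =>
            (Fintype.sum_equiv (Equiv.addLeft x)
              (fun u => (-1 : ℤ) ^ ((g x).val) * (-1 : ℤ) ^ ((g (x + u)).val))
              (fun y => (-1 : ℤ) ^ ((g x).val) * (-1 : ℤ) ^ ((g y).val))
              (fun u => rfl)).symm
      _ = ∑ x : GaloisField 2 m, ∑ u : GaloisField 2 m,
            (-1 : ℤ) ^ ((g u).val) *
              (-1 : ℤ) ^ ((Tr m ((c * (u ^ 2 ^ (m - k) + u ^ 2 ^ k)) * x)).val) := by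
          apply Finset.sum_congr rfl
          intro x _
          apply Finset.sum_congr rfl
          intro u _
          rw [hq u x, chi_add, chi_add]
          linear_combination
            ((-1 : ℤ) ^ ((g u).val) *
              (-1 : ℤ) ^ ((Tr m ((c * (u ^ 2 ^ (m - k) + u ^ 2 ^ k)) * x)).val)) *
              chi_sq (g x)
      _ = ∑ u : GaloisField 2 m, ∑ x : GaloisField 2 m,
            (-1 : ℤ) ^ ((g u).val) *
              (-1 : ℤ) ^ ((Tr m ((c * (u ^ 2 ^ (m - k) + u ^ 2 ^ k)) * x)).val) :=
          Finset.sum_comm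
      _ = ∑ u : GaloisField 2 m, (-1 : ℤ) ^ ((g u).val) *
            (if c * (u ^ 2 ^ (m - k) + u ^ 2 ^ k) = 0 then (2 : ℤ) ^ m else 0) := by
          apply Finset.sum_congr rfl
          intro u _
          rw [← Finset.mul_sum, sum_chi hm0]
  -- Step E : the vanishing condition picks out the subfield F_{2^{2k}}
  have hd0 : ∀ u : GaloisField 2 m,
      c * (u ^ 2 ^ (m - k) + u ^ 2 ^ k) = 0 ↔ u ^ 2 ^ (2 * k) = u := by
    intro u
    constructor
    · intro h
      have h2 : u ^ 2 ^ (m - k) + u ^ 2 ^ k = 0 := by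
        rcases mul_eq_zero.mp h with h' | h'
        · exact absurd h' hc
        · exact h'
      have h3 : u ^ 2 ^ (m - k) = u ^ 2 ^ k := by
        have h4 := eq_neg_of_add_eq_zero_left h2
        rwa [CharTwo.neg_eq] at h4
      have h5 : (u ^ 2 ^ (m - k)) ^ (2 ^ k : ℕ) = (u ^ 2 ^ k) ^ (2 ^ k : ℕ) := by rw [h3]
      rw [← pow_mul, ← pow_mul, ← pow_add, ← pow_add, Nat.sub_add_cancel hkm',
        pow_card_K hm0] at h5
      rw [show 2 * k = k + k from by ring]
      exact h5.symm
    · intro h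
      have hiter : ∀ s : ℕ, u ^ 2 ^ (2 * k * s) = u := by
        intro s
        induction s with
        | zero => simp
        | succ s ih =>
          have h1 : u ^ 2 ^ (2 * k * (s + 1)) = (u ^ 2 ^ (2 * k * s)) ^ (2 ^ (2 * k) : ℕ) := by
            rw [← pow_mul, ← pow_add, Nat.mul_add, Nat.mul_one]
          rw [h1, ih, h]
      have h5 : 2 * k * (t - 1) + 2 * k = m := by
        rw [hm2k, ← Nat.mul_succ]
        congr 1
        omega
      have h6 : m = 2 * k * (t - 1) + k + k := by omega
      have hmk : m - k = 2 * k * (t - 1) + k := by omega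
      have h7 : u ^ 2 ^ (m - k) = u ^ (2 ^ k : ℕ) := by
        rw [hmk, pow_add, pow_mul, hiter]
      rw [h7, CharTwo.add_self_eq_zero, mul_zero]
  set E : Finset (GaloisField 2 m) :=
    Finset.univ.filter (fun u => u ^ 2 ^ (2 * k) = u) with hEdef
  have hWsq2 : (Walsh m f a b) ^ 2 = (2 : ℤ) ^ m * ∑ u ∈ E, (-1 : ℤ) ^ ((g u).val) := by
    rw [hWsq]
    calc (∑ u : GaloisField 2 m, (-1 : ℤ) ^ ((g u).val) *
            (if c * (u ^ 2 ^ (m - k) + u ^ 2 ^ k) = 0 then (2 : ℤ) ^ m else 0))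
        = ∑ u : GaloisField 2 m,
            (if u ^ 2 ^ (2 * k) = u then (-1 : ℤ) ^ ((g u).val) * 2 ^ m else 0) := by
          apply Finset.sum_congr rfl
          intro u _
          simp only [hd0 u, mul_ite, mul_zero]
      _ = ∑ u ∈ E, (-1 : ℤ) ^ ((g u).val) * 2 ^ m := (Finset.sum_filter _ _).symm
      _ = (2 : ℤ) ^ m * ∑ u ∈ E, (-1 : ℤ) ^ ((g u).val) := by
          rw [← Finset.sum_mul, mul_comm]
  -- Step F : cardinality of E
  have hP0 : (X ^ 2 ^ (2 * k) - X : (GaloisField 2 m)[X]) ≠ 0 :=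
    FiniteField.X_pow_card_pow_sub_X_ne_zero _ (by omega) one_lt_two
  have hQ0 : (X ^ 2 ^ m - X : (GaloisField 2 m)[X]) ≠ 0 :=
    FiniteField.X_pow_card_pow_sub_X_ne_zero _ hm0 one_lt_two
  have hdvd : (X ^ 2 ^ (2 * k) - X : (GaloisField 2 m)[X]) ∣ X ^ 2 ^ m - X := by
    have h := dvd_X_pow (GaloisField 2 m) (2 * k) t ht0
    rwa [show 2 * k * t = m from hm2k.symm] at h
  have hQroots : (X ^ 2 ^ m - X : (GaloisField 2 m)[X]).roots = Finset.univ.val := by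
    have h := FiniteField.roots_X_pow_card_sub_X (GaloisField 2 m)
    rwa [card_K hm0] at h
  have hQsplits : Splits
      (X ^ 2 ^ m - X : (GaloisField 2 m)[X]) := by
    rw [splits_iff_card_roots, hQroots,
      FiniteField.X_pow_card_pow_sub_X_natDegree_eq _ hm0 one_lt_two]
    simpa using card_K hm0
  have hPsplits := hQsplits.of_dvd hQ0 hdvd
  have hcard_roots : (X ^ 2 ^ (2 * k) - X : (GaloisField 2 m)[X]).roots.card = 2 ^ (2 * k) := by
    rw [splits_iff_card_roots.mp hPsplits,
      FiniteField.X_pow_card_pow_sub_X_natDegree_eq _ (by omega) one_lt_two]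
  have hnodup : (X ^ 2 ^ (2 * k) - X : (GaloisField 2 m)[X]).roots.Nodup :=
    Multiset.nodup_of_le (Polynomial.roots.le_of_dvd hQ0 hdvd)
      (hQroots ▸ Finset.univ.nodup)
  have hEeq : E = (X ^ 2 ^ (2 * k) - X : (GaloisField 2 m)[X]).roots.toFinset := by
    rw [hEdef]
    ext u
    simp only [Finset.mem_filter, Finset.mem_univ, true_and, Multiset.mem_toFinset,
      Polynomial.mem_roots hP0, Polynomial.IsRoot.def, Polynomial.eval_sub,
      Polynomial.eval_pow, Polynomial.eval_X, sub_eq_zero]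
  have hcardE : E.card = 2 ^ (2 * k) := by
    rw [hEeq, Multiset.toFinset_card_of_nodup hnodup, hcard_roots]
  -- Step G : g is additive on E
  have hgadd : ∀ u v : GaloisField 2 m, v ^ 2 ^ (2 * k) = v → g (u + v) = g u + g v := by
    intro u v hv2
    have hpoly : c * (u + v) ^ (2 ^ k + 1) + b * (u + v) =
        (c * u ^ (2 ^ k + 1) + b * u) + (c * v ^ (2 ^ k + 1) + b * v) +
          (c * (u * v ^ 2 ^ k) + c * (u ^ 2 ^ k * v)) := by
      have e1 : ∀ z : GaloisField 2 m, z ^ (2 ^ k + 1) = z ^ 2 ^ k * z :=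
        fun z => pow_succ z (2 ^ k)
      rw [e1, e1, e1, show (u + v) ^ (2 ^ k : ℕ) = u ^ (2 ^ k : ℕ) + v ^ (2 ^ k : ℕ)
        from add_pow_char_pow u v 2 k]
      ring
    have h1 : Tr m (c * (u ^ 2 ^ k * v)) = Tr m (c * (u * v ^ 2 ^ k)) := by
      have h := tr_pow2 k (c * (u * v ^ 2 ^ k))
      rw [mul_pow, mul_pow, ← pow_mul v, ← pow_add,
        show k + k = 2 * k from by ring, hv2, hc_pow] at h
      exact h
    have hcross0 : Tr m (c * (u * v ^ 2 ^ k) + c * (u ^ 2 ^ k * v)) = 0 := by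
      rw [tr_add, h1, CharTwo.add_self_eq_zero]
    show Tr m (c * (u + v) ^ (2 ^ k + 1) + b * (u + v)) = _
    rw [hpoly, tr_add, tr_add, hcross0, add_zero]
  -- Step H : conclusion
  by_cases hex : ∃ u ∈ E, g u ≠ 0
  · left
    obtain ⟨u0, hu0E, hu0⟩ := hex
    have hgu0 : g u0 = 1 := zmod2_eq_one hu0
    have hu0E' : u0 ^ 2 ^ (2 * k) = u0 := by
      have := hu0E
      rw [hEdef, Finset.mem_filter] at this
      exact this.2
    set S : ℤ := ∑ u ∈ E, (-1 : ℤ) ^ ((g u).val) with hSdef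
    have hflip : ∀ s : ZMod 2, (-1 : ℤ) ^ ((s + 1).val) = -((-1 : ℤ) ^ s.val) := by decide
    have hEadd : ∀ u ∈ E, u + u0 ∈ E := by
      intro u hu
      rw [hEdef, Finset.mem_filter] at hu ⊢
      refine ⟨Finset.mem_univ _, ?_⟩
      rw [add_pow_char_pow, hu.2, hu0E']
    have hinv : ∀ u : GaloisField 2 m, u + u0 + u0 = u := by
      intro u
      rw [add_assoc, CharTwo.add_self_eq_zero, add_zero]
    have hbij : S = ∑ u ∈ E, (-1 : ℤ) ^ ((g (u + u0)).val) := by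
      refine Finset.sum_nbij' (fun u => u + u0) (fun u => u + u0) hEadd hEadd
        (fun u _ => hinv u) (fun u _ => hinv u) ?_
      intro u hu
      rw [hinv u]
    have hkey : S = -S := by
      calc S = ∑ u ∈ E, (-1 : ℤ) ^ ((g (u + u0)).val) := hbij
        _ = ∑ u ∈ E, -((-1 : ℤ) ^ ((g u).val)) := by
            apply Finset.sum_congr rfl
            intro u _
            rw [hgadd u u0 hu0E', hgu0, hflip]
        _ = -S := by rw [Finset.sum_neg_distrib]
    have hS0 : S = 0 := by omega
    rw [hWsq2, hS0, mul_zero]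
  · right
    push_neg at hex
    have hone : ∀ u ∈ E, (-1 : ℤ) ^ ((g u).val) = 1 := by
      intro u hu
      rw [hex u hu]
      rfl
    rw [hWsq2, Finset.sum_congr rfl hone, Finset.sum_const, hcardE]
    show (2 : ℤ) ^ m * ((2 ^ (2 * k) : ℕ) • (1 : ℤ)) = 2 ^ (m + 2 * k)
    rw [nsmul_eq_mul, mul_one, pow_add]
    push_cast
    ring
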